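/- For every integer n ≥ 3, the treecut width of the complete bipartite graph K_{n,n} equals 2n − 2, i.e., tcw(K_{n,n}) = 2n − 2. -/

import Mathlib

/-- `a` is the parent of `b` in the rooted tree/forest given by `par`. -/
def ParentRel {τ : Type} (par : τ → Option τ) (a b : τ) : Prop := par b = some a

/-- `a` is a strict ancestor of `b`. -/
def Anc {τ : Type} (par : τ → Option τ) : τ → τ → Prop :=
  Relation.TransGen (ParentRel par)

/-- The data of a treecut decomposition: a parent function on the node type `τ`
(describing the rooted tree) together with a labelling `χ` of nodes by vertex sets. -/
structure PreDecomp (V τ : Type) where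
  parent : τ → Option τ
  χ : τ → Set V

/-- `(T, χ)` is a treecut decomposition: the tree is acyclic with a unique root,
and the sets `χ t` form a near-partition of `V` (pairwise disjoint, covering,
empty sets allowed). -/
def IsTCDecomp {V τ : Type} (D : PreDecomp V τ) : Prop :=
  (∀ t, ¬ Anc D.parent t t) ∧ (∃! r, D.parent r = none) ∧ (∀ v : V, ∃! t, v ∈ D.χ t)

/-- The nodes in the subtree rooted at `t` (including `t` itself). -/
def subtreeNodes {τ : Type} (par : τ → Option τ) (t : τ) : Set τ :=
  {s | s = t ∨ Anc par t s}

/-- `V_t`: the union of `χ s` over the nodes `s` of the subtree rooted at `t`. -/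
def subtreeSet {V τ : Type} (D : PreDecomp V τ) (t : τ) : Set V :=
  ⋃ s ∈ subtreeNodes D.parent t, D.χ s

/-- The number of edges of `G` with exactly one endpoint in `S`
(each such edge is counted once, as the ordered pair (inside, outside)). -/
noncomputable def cutsize {V : Type} (G : SimpleGraph V) (S : Set V) : ℕ :=
  {p : V × V | G.Adj p.1 p.2 ∧ p.1 ∈ S ∧ p.2 ∉ S}.ncard

/-- The adhesion of a node `t`: the number of edges leaving `V_t`. -/
noncomputable def adhesion {V τ : Type} (G : SimpleGraph V) (D : PreDecomp V τ) (t : τ) : ℕ :=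
  cutsize G (subtreeSet D t)

/-- The torsowidth of `t`: `|χ t|` plus the number of neighbours of `t` in the tree. -/
noncomputable def torsowidth {V τ : Type} (D : PreDecomp V τ) (t : τ) : ℕ :=
  (D.χ t).ncard + {s | D.parent s = some t ∨ D.parent t = some s}.ncard

/-- The treecut decomposition has width at most `w`. -/
def WidthLE {V τ : Type} (G : SimpleGraph V) (D : PreDecomp V τ) (w : ℕ) : Prop :=
  ∀ t, adhesion G D t ≤ w ∧ torsowidth D t ≤ w

/-- The height of node `t`: the number of nodes on the path from the root to `t`,
i.e. one plus the number of strict ancestors of `t`. -/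
noncomputable def nodeDepth {τ : Type} (par : τ → Option τ) (t : τ) : ℕ :=
  Nat.card {a // Anc par a t} + 1

/-- The treecut width of a graph `G`: the least `w` such that `G` has a
treecut decomposition of width at most `w`. -/
noncomputable def tcw {V : Type} [Finite V] (G : SimpleGraph V) : ℕ :=
  sInf {w | ∃ (τ : Type) (_ : Finite τ) (D : PreDecomp V τ), IsTCDecomp D ∧ WidthLE G D w}


lemma my_ncard_prod {α β : Type*} (s : Set α) (t : Set β) :
    (s ×ˢ t).ncard = s.ncard * t.ncard := by
  rw [← Nat.card_coe_set_eq, ← Nat.card_coe_set_eq, ← Nat.card_coe_set_eq,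
    Nat.card_congr (Equiv.Set.prod s t), Nat.card_prod]

lemma cutset_eq (n : ℕ) (S : Set (Fin n ⊕ Fin n)) :
    {p : (Fin n ⊕ Fin n) × (Fin n ⊕ Fin n) |
        (completeBipartiteGraph (Fin n) (Fin n)).Adj p.1 p.2 ∧ p.1 ∈ S ∧ p.2 ∉ S}
    = (Sum.inl '' (Sum.inl ⁻¹' S)) ×ˢ (Sum.inr '' (Sum.inr ⁻¹' S)ᶜ)
      ∪ (Sum.inr '' (Sum.inr ⁻¹' S)) ×ˢ (Sum.inl '' (Sum.inl ⁻¹' S)ᶜ) := by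
  ext ⟨x, y⟩
  cases x <;> cases y <;>
    simp [completeBipartiteGraph, Set.mem_prod]

lemma cutsize_formula (n : ℕ) (S : Set (Fin n ⊕ Fin n)) :
    cutsize (completeBipartiteGraph (Fin n) (Fin n)) S
      = (Sum.inl ⁻¹' S : Set (Fin n)).ncard * ((Sum.inr ⁻¹' S : Set (Fin n))ᶜ).ncard
        + (Sum.inr ⁻¹' S : Set (Fin n)).ncard * ((Sum.inl ⁻¹' S : Set (Fin n))ᶜ).ncard := by
  unfold cutsize
  rw [cutset_eq]
  rw [Set.ncard_union_eq ?_ (Set.toFinite _) (Set.toFinite _)]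
  · rw [my_ncard_prod, my_ncard_prod,
      Set.ncard_image_of_injective _ Sum.inl_injective,
      Set.ncard_image_of_injective _ Sum.inr_injective,
      Set.ncard_image_of_injective _ Sum.inr_injective,
      Set.ncard_image_of_injective _ Sum.inl_injective]
  · rw [Set.disjoint_left]
    rintro ⟨x, y⟩ ⟨hx, -⟩ ⟨hx', -⟩
    simp only [Set.mem_image] at hx hx'
    obtain ⟨a, -, ha⟩ := hx
    obtain ⟨b, -, hb⟩ := hx'
    rw [← ha] at hb; simp at hb

lemma ncard_compl_fin (n : ℕ) (A : Set (Fin n)) : (Aᶜ).ncard = n - A.ncard := by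
  have := Set.ncard_add_ncard_compl A
  simp only [Nat.card_eq_fintype_card, Fintype.card_fin] at this
  omega

lemma S_ncard (n : ℕ) (S : Set (Fin n ⊕ Fin n)) :
    S.ncard = (Sum.inl ⁻¹' S : Set (Fin n)).ncard + (Sum.inr ⁻¹' S : Set (Fin n)).ncard := by
  have hS : S = Sum.inl '' (Sum.inl ⁻¹' S) ∪ Sum.inr '' (Sum.inr ⁻¹' S) := by
    ext x; cases x <;> simp
  conv_lhs => rw [hS]
  rw [Set.ncard_union_eq ?_ (Set.toFinite _) (Set.toFinite _),
    Set.ncard_image_of_injective _ Sum.inl_injective,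
    Set.ncard_image_of_injective _ Sum.inr_injective]
  rw [Set.disjoint_left]
  rintro x ⟨a, -, rfl⟩ ⟨b, -, hb⟩
  simp at hb

lemma dichotomy_arith (n p q : ℕ) (hn : 3 ≤ n) (hp : p ≤ n) (hq : q ≤ n)
    (h : p * (n - q) + q * (n - p) ≤ 2 * n - 3) : p + q ≤ 1 ∨ 2 * n - 1 ≤ p + q := by
  by_contra hcon
  push_neg at hcon
  obtain ⟨h1, h2⟩ := hcon
  rcases Nat.eq_zero_or_pos p with hp0 | hp1
  · subst hp0
    have : 2 * n ≤ q * n := Nat.mul_le_mul_right n (by omega)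
    simp only [Nat.zero_mul, Nat.mul_zero, Nat.sub_zero] at h
    omega
  rcases Nat.eq_zero_or_pos q with hq0 | hq1
  · subst hq0
    have : 2 * n ≤ p * n := Nat.mul_le_mul_right n (by omega)
    simp only [Nat.zero_mul, Nat.mul_zero, Nat.sub_zero] at h
    omega
  rcases eq_or_lt_of_le hp with hpn | hpn
  · subst hpn
    have : 2 * p ≤ p * (p - q) := by
      calc 2 * p ≤ (p - q) * p := Nat.mul_le_mul_right p (by omega)
      _ = p * (p - q) := Nat.mul_comm _ _
    omega
  rcases eq_or_lt_of_le hq with hqn | hqn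
  · subst hqn
    have : 2 * q ≤ q * (q - p) := by
      calc 2 * q ≤ (q - p) * q := Nat.mul_le_mul_right q (by omega)
      _ = q * (q - p) := Nat.mul_comm _ _
    omega
  -- now 1 ≤ p ≤ n-1, 1 ≤ q ≤ n-1
  zify [hp, hq, show 3 ≤ 2*n by omega] at h
  have k1 : ((p : ℤ) - 1) * ((n:ℤ) - q - 1) ≥ 0 :=
    mul_nonneg (by omega) (by omega)
  have k2 : ((q : ℤ) - 1) * ((n:ℤ) - p - 1) ≥ 0 :=
    mul_nonneg (by omega) (by omega)
  have hb : 2 ≤ (p:ℤ) + q ∧ (p:ℤ) + q ≤ 2*n - 2 := by omega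
  nlinarith [k1, k2, hb.1, hb.2]

lemma my_ncard_biUnion_le {ι α : Type*} [Finite α] (s : Finset ι) (f : ι → Set α) :
    (⋃ i ∈ s, f i).ncard ≤ ∑ i ∈ s, (f i).ncard := by
  classical
  induction s using Finset.induction with
  | empty => simp
  | @insert a s ha ih =>
    rw [Finset.set_biUnion_insert, Finset.sum_insert ha]
    exact le_trans (Set.ncard_union_le _ _)
      (Nat.add_le_add_left ih _)

section Tree
variable {τ : Type} (par : τ → Option τ)

lemma nodeDepth_lt [Finite τ] (hacyc : ∀ t, ¬ Anc par t t) {a t : τ} (h : par t = some a) :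
    nodeDepth par a < nodeDepth par t := by
  have hsub : {x | Anc par x a} ⊂ {x | Anc par x t} := by
    constructor
    · intro x hx
      exact Relation.TransGen.trans hx (Relation.TransGen.single h)
    · intro hsup
      exact hacyc a (hsup (Relation.TransGen.single h : Anc par a t))
  have hlt := Set.ncard_lt_ncard hsub (Set.toFinite _)
  have e1 : Nat.card {x // Anc par x a} = ({x | Anc par x a} : Set τ).ncard :=
    Nat.card_coe_set_eq _
  have e2 : Nat.card {x // Anc par x t} = ({x | Anc par x t} : Set τ).ncard :=
    Nat.card_coe_set_eq _
  unfold nodeDepth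
  omega

lemma mem_subtree_root [Finite τ] (hacyc : ∀ t, ¬ Anc par t t) {r : τ}
    (hru : ∀ y, par y = none → y = r) (t : τ) : t ∈ subtreeNodes par r := by
  have key : ∀ d t, nodeDepth par t ≤ d → t ∈ subtreeNodes par r := by
    intro d
    induction d with
    | zero => intro t ht; simp [nodeDepth] at ht
    | succ d ih =>
      intro t ht
      cases hpt : par t with
      | none => exact Or.inl (hru t hpt)
      | some a =>
        have hlt := nodeDepth_lt par hacyc hpt
        rcases ih a (by omega) with h1 | h2
        · exact Or.inr (h1 ▸ Relation.TransGen.single hpt)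
        · exact Or.inr (Relation.TransGen.trans h2 (Relation.TransGen.single hpt))
  exact key (nodeDepth par t) t le_rfl

lemma anc_exists_child {t s : τ} (h : Anc par t s) :
    ∃ c, par c = some t ∧ s ∈ subtreeNodes par c := by
  induction h using Relation.TransGen.head_induction_on with
  | single hb => exact ⟨s, hb, Or.inl rfl⟩
  | head hx htg _ => exact ⟨_, hx, Or.inr htg⟩

end Tree

lemma ncard_le_fin (n : ℕ) (A : Set (Fin n)) : A.ncard ≤ n := by
  have := Set.ncard_add_ncard_compl A
  simp only [Nat.card_eq_fintype_card, Fintype.card_fin] at this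
  omega

lemma cut_dichotomy (n : ℕ) (hn : 3 ≤ n) (S : Set (Fin n ⊕ Fin n))
    (h : cutsize (completeBipartiteGraph (Fin n) (Fin n)) S ≤ 2 * n - 3) :
    S.ncard ≤ 1 ∨ 2 * n - 1 ≤ S.ncard := by
  rw [cutsize_formula, ncard_compl_fin, ncard_compl_fin] at h
  rw [S_ncard]
  exact dichotomy_arith n _ _ hn (ncard_le_fin n _) (ncard_le_fin n _) h

lemma lower_bound (n : ℕ) (hn : 3 ≤ n) (τ : Type) [Finite τ]
    (D : PreDecomp (Fin n ⊕ Fin n) τ) (hD : IsTCDecomp D) (w : ℕ)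
    (hw : WidthLE (completeBipartiteGraph (Fin n) (Fin n)) D w) : 2 * n - 2 ≤ w := by
  by_contra hcon
  push_neg at hcon
  obtain ⟨hacyc, hroot, hpart⟩ := hD
  obtain ⟨r, hr, hru⟩ := hroot
  have hdich : ∀ t, (subtreeSet D t).ncard ≤ 1 ∨ 2 * n - 1 ≤ (subtreeSet D t).ncard :=
    fun t => cut_dichotomy n hn _ (le_trans (hw t).1 (by omega))
  have hrootU : subtreeSet D r = Set.univ := by
    ext v
    simp only [Set.mem_univ, iff_true, subtreeSet, Set.mem_iUnion]
    obtain ⟨t, ht, -⟩ := hpart v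
    exact ⟨t, mem_subtree_root D.parent hacyc (fun y hy => hru y hy) t, ht⟩
  have hcard2n : Nat.card (Fin n ⊕ Fin n) = n + n := by
    simp [Nat.card_eq_fintype_card]
  have hΦr : 2 * n - 1 ≤ (subtreeSet D r).ncard := by
    rw [hrootU, Set.ncard_univ]
    omega
  haveI : IsTrans τ (fun a b => Anc D.parent b a) :=
    ⟨fun a b c h1 h2 => Relation.TransGen.trans h2 h1⟩
  haveI : IsIrrefl τ (fun a b => Anc D.parent b a) := ⟨hacyc⟩
  have wf := Finite.wellFounded_of_trans_of_irrefl (fun a b => Anc D.parent b a)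
  obtain ⟨t0, ht0, hmax⟩ := wf.has_min {t | 2 * n - 1 ≤ (subtreeSet D t).ncard} ⟨r, hΦr⟩
  have hchild : ∀ c, D.parent c = some t0 → (subtreeSet D c).ncard ≤ 1 := by
    intro c hc
    rcases hdich c with h | h
    · exact h
    · exact absurd (Relation.TransGen.single hc : Anc D.parent t0 c) (hmax c h)
  set C : Set τ := {s | D.parent s = some t0} with hCdef
  have hsubset : subtreeSet D t0 ⊆ D.χ t0 ∪ ⋃ c ∈ C.toFinite.toFinset, subtreeSet D c := by
    intro v hv
    obtain ⟨s, hs, hvs⟩ : ∃ s, s ∈ subtreeNodes D.parent t0 ∧ v ∈ D.χ s := by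
      simpa [subtreeSet, Set.mem_iUnion] using hv
    rcases hs with rfl | hanc
    · exact Or.inl hvs
    · obtain ⟨c, hc, hsc⟩ := anc_exists_child D.parent hanc
      refine Or.inr ?_
      have h1 : v ∈ subtreeSet D c := Set.mem_biUnion hsc hvs
      have h2 : c ∈ C.toFinite.toFinset := by rw [Set.Finite.mem_toFinset]; exact hc
      exact Set.mem_biUnion h2 h1
  have hcard : (subtreeSet D t0).ncard ≤ (D.χ t0).ncard + C.ncard := by
    calc (subtreeSet D t0).ncard
        ≤ (D.χ t0 ∪ ⋃ c ∈ C.toFinite.toFinset, subtreeSet D c).ncard :=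
          Set.ncard_le_ncard hsubset (Set.toFinite _)
      _ ≤ (D.χ t0).ncard + (⋃ c ∈ C.toFinite.toFinset, subtreeSet D c).ncard :=
          Set.ncard_union_le _ _
      _ ≤ (D.χ t0).ncard + ∑ c ∈ C.toFinite.toFinset, (subtreeSet D c).ncard :=
          Nat.add_le_add_left (my_ncard_biUnion_le _ _) _
      _ ≤ (D.χ t0).ncard + ∑ _c ∈ C.toFinite.toFinset, 1 := by
          refine Nat.add_le_add_left (Finset.sum_le_sum ?_) _
          intro c hc
          exact hchild c (by rw [Set.Finite.mem_toFinset] at hc; exact hc)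
      _ = (D.χ t0).ncard + C.toFinite.toFinset.card := by
          rw [Finset.sum_const, smul_eq_mul, mul_one]
      _ = (D.χ t0).ncard + C.ncard := by
          rw [Set.ncard_eq_toFinset_card C]
  have hC : C.ncard ≤ {s | D.parent s = some t0 ∨ D.parent t0 = some s}.ncard :=
    Set.ncard_le_ncard (fun s hs => Or.inl hs) (Set.toFinite _)
  have htor := (hw t0).2
  unfold torsowidth at htor
  have ht0' : 2 * n - 1 ≤ (subtreeSet D t0).ncard := ht0
  omega

def upD (n : ℕ) : PreDecomp (Fin n ⊕ Fin n) (Option (Fin n)) where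
  parent := fun t => match t with | none => none | some _ => some none
  χ := fun t => match t with | none => ∅ | some i => {Sum.inl i, Sum.inr i}

lemma upD_parent_none (n : ℕ) : (upD n).parent none = none := rfl
lemma upD_parent_some (n : ℕ) (i : Fin n) : (upD n).parent (some i) = some none := rfl

lemma upD_step (n : ℕ) {a b : Option (Fin n)} (h : ParentRel (upD n).parent a b) :
    a = none ∧ ∃ i, b = some i := by
  cases b with
  | none => exact absurd h (by simp [ParentRel, upD_parent_none])
  | some i =>
    have h' : some (none : Option (Fin n)) = some a := h
    exact ⟨(Option.some_injective _ h').symm, i, rfl⟩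

lemma upD_anc (n : ℕ) {a b : Option (Fin n)} (h : Anc (upD n).parent a b) :
    a = none ∧ ∃ i, b = some i := by
  constructor
  · induction h using Relation.TransGen.head_induction_on with
    | single h => exact (upD_step n h).1
    | head h _ _ => exact (upD_step n h).1
  · cases h with
    | single h => exact (upD_step n h).2
    | tail h1 h2 => exact (upD_step n h2).2

lemma upD_isTCD (n : ℕ) : IsTCDecomp (upD n) := by
  refine ⟨?_, ⟨none, rfl, ?_⟩, ?_⟩
  · intro t ht
    obtain ⟨h1, i, h2⟩ := upD_anc n ht
    rw [h1] at h2; exact absurd h2 (by simp)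
  · intro y hy
    cases y with
    | none => rfl
    | some i => exact absurd hy (by simp [upD_parent_some])
  · intro v
    cases v with
    | inl i =>
      refine ⟨some i, by simp [upD], ?_⟩
      intro t ht
      cases t with
      | none => simp [upD] at ht
      | some j => simp [upD] at ht; rw [ht]
    | inr i =>
      refine ⟨some i, by simp [upD], ?_⟩
      intro t ht
      cases t with
      | none => simp [upD] at ht
      | some j => simp [upD] at ht; rw [ht]

lemma upD_subtreeSet_none (n : ℕ) : subtreeSet (upD n) none = Set.univ := by
  ext v
  simp only [Set.mem_univ, iff_true, subtreeSet, Set.mem_iUnion]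
  rcases v with i | i
  · exact ⟨some i, Or.inr (Relation.TransGen.single rfl), by simp [upD]⟩
  · exact ⟨some i, Or.inr (Relation.TransGen.single rfl), by simp [upD]⟩

lemma upD_subtreeSet_some (n : ℕ) (i : Fin n) :
    subtreeSet (upD n) (some i) = {Sum.inl i, Sum.inr i} := by
  ext v
  simp only [subtreeSet, Set.mem_iUnion]
  constructor
  · rintro ⟨s, hs, hv⟩
    rcases hs with rfl | hanc
    · simpa [upD] using hv
    · obtain ⟨h1, -⟩ := upD_anc n hanc
      exact absurd h1 (by simp)
  · intro hv
    exact ⟨some i, Or.inl rfl, by simpa [upD] using hv⟩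

lemma upD_width (n : ℕ) (hn : 3 ≤ n) :
    WidthLE (completeBipartiteGraph (Fin n) (Fin n)) (upD n) (2 * n - 2) := by
  intro t
  cases t with
  | none =>
    constructor
    · have : adhesion (completeBipartiteGraph (Fin n) (Fin n)) (upD n) none = 0 := by
        unfold adhesion cutsize
        rw [upD_subtreeSet_none]
        simp
      omega
    · unfold torsowidth
      have hχ : ((upD n).χ none).ncard = 0 := by simp [upD]
      have hnb : {s | (upD n).parent s = some none ∨ (upD n).parent none = some s}
          = Set.range (some : Fin n → Option (Fin n)) := by
        ext s
        simp only [Set.mem_setOf_eq, Set.mem_range]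
        constructor
        · rintro (h | h)
          · cases s with
            | none => exact absurd h (by simp [upD_parent_none])
            | some j => exact ⟨j, rfl⟩
          · exact absurd h (by simp [upD_parent_none])
        · rintro ⟨j, rfl⟩
          exact Or.inl rfl
      rw [hχ, hnb]
      have : (Set.range (some : Fin n → Option (Fin n))).ncard = n := by
        rw [← Set.image_univ, Set.ncard_image_of_injective _ (Option.some_injective _),
          Set.ncard_univ, Nat.card_eq_fintype_card, Fintype.card_fin]
      omega
  | some i =>
    constructor
    · unfold adhesion
      rw [upD_subtreeSet_some, cutsize_formula]
      have hA : (Sum.inl ⁻¹' ({Sum.inl i, Sum.inr i} : Set (Fin n ⊕ Fin n)) : Set (Fin n))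
          = {i} := by ext j; simp
      have hB : (Sum.inr ⁻¹' ({Sum.inl i, Sum.inr i} : Set (Fin n ⊕ Fin n)) : Set (Fin n))
          = {i} := by ext j; simp
      rw [hA, hB, ncard_compl_fin, Set.ncard_singleton]
      omega
    · unfold torsowidth
      have hχ : ((upD n).χ (some i)).ncard = 2 := by
        have : ((upD n).χ (some i)) = {Sum.inl i, Sum.inr i} := rfl
        rw [this, Set.ncard_pair (by simp)]
      have hnb : {s | (upD n).parent s = some (some i) ∨ (upD n).parent (some i) = some s}
          = {none} := by
        ext s
        simp only [Set.mem_setOf_eq, Set.mem_singleton_iff]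
        constructor
        · rintro (h | h)
          · cases s with
            | none => exact absurd h (by simp [upD_parent_none])
            | some j =>
              exfalso
              have h' : some (none : Option (Fin n)) = some (some i) := h
              exact absurd h' (by simp)
          · have h' : some (none : Option (Fin n)) = some s := h
            exact (Option.some_injective _ h').symm
        · rintro rfl
          exact Or.inr rfl
      rw [hχ, hnb, Set.ncard_singleton]
      omega

theorem tcw_completeBipartiteGraph (n : ℕ) (hn : 3 ≤ n) :
    tcw (completeBipartiteGraph (Fin n) (Fin n)) = 2 * n - 2 := by
  have hmem : 2 * n - 2 ∈ {w | ∃ (τ : Type) (_ : Finite τ)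
      (D : PreDecomp (Fin n ⊕ Fin n) τ), IsTCDecomp D ∧
      WidthLE (completeBipartiteGraph (Fin n) (Fin n)) D w} :=
    ⟨Option (Fin n), inferInstance, upD n, upD_isTCD n, upD_width n hn⟩
  refine le_antisymm (Nat.sInf_le hmem) (le_csInf ⟨_, hmem⟩ ?_)
  rintro w ⟨τ, hτ, D, hD, hw⟩
  exact @lower_bound n hn τ hτ D hD w hw
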